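/- If X, Y, Z are independent random vectors in ℝⁿ with absolutely continuous distributions, and the entropies h(X+Y+Z), h(Z), h(X+Z), h(Y+Z) are all well-defined (finite), then h(X+Y+Z) + h(Z) ≤ h(X+Z) + h(Y+Z). -/

import Mathlib

open MeasureTheory ProbabilityTheory Real Pointwise

/-- Differential (Shannon) entropy of a measure on ℝⁿ,
computed from its density w.r.t. Lebesgue measure: `h(μ) = -∫ p log p`. -/
noncomputable def dEnt {n : ℕ} (μ : Measure (EuclideanSpace ℝ (Fin n))) : ℝ :=
  -∫ x, ((μ.rnDeriv volume x).toReal) * Real.log ((μ.rnDeriv volume x).toReal)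

/-- The integrand whose integrability expresses that the entropy of `μ` is
well-defined and finite. -/
noncomputable def entIntegrand {n : ℕ} (μ : Measure (EuclideanSpace ℝ (Fin n))) :
    EuclideanSpace ℝ (Fin n) → ℝ :=
  fun x => ((μ.rnDeriv volume x).toReal) * Real.log ((μ.rnDeriv volume x).toReal)

namespace EntropySubmodAux

open ENNReal

variable {n : ℕ}
local notation "E" => EuclideanSpace ℝ (Fin n)

lemma ennreal_cancel (a b c : ℝ≥0∞) : c * (a / (b * c)) ≤ a / b := by
  rcases eq_or_ne c 0 with rfl | hc0
  · simp
  rcases eq_or_ne c ⊤ with rfl | hct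
  · rcases eq_or_ne a 0 with rfl | ha0
    · simp
    rcases eq_or_ne b 0 with rfl | hb0
    · simp [ENNReal.div_zero ha0]
    · simp [ENNReal.mul_top hb0, ENNReal.div_top]
  · rw [div_eq_mul_inv, ENNReal.mul_inv (Or.inr hct) (Or.inr hc0), div_eq_mul_inv]
    calc c * (a * (b⁻¹ * c⁻¹)) = (a * b⁻¹) * (c⁻¹ * c) := by ring
    _ ≤ (a * b⁻¹) * 1 := mul_le_mul_right (ENNReal.inv_mul_le_one c) _
    _ = a * b⁻¹ := mul_one _

lemma lintegral_sub_left' (H : E → ℝ≥0∞) (hH : Measurable H) (w : E) :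
    ∫⁻ x, H (w - x) = ∫⁻ x, H x := by
  conv_rhs => rw [← Measure.map_sub_left_eq_self (volume : Measure E) w]
  rw [lintegral_map hH (by fun_prop : Measurable fun t : E => w - t)]

lemma conv_withDensity (f : E → ℝ≥0∞) (hf : Measurable f)
    (ν : Measure E) [SFinite ν] :
    Measure.map (fun p : E × E => p.1 + p.2) ((volume.withDensity f).prod ν)
      = volume.withDensity (fun w => ∫⁻ z, f (w - z) ∂ν) := by
  ext A hA
  rw [Measure.map_apply measurable_add hA, withDensity_apply _ hA,
    ← lintegral_indicator hA]
  set ind := A.indicator (1 : E → ℝ≥0∞) with hind_def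
  have hindm : Measurable ind := measurable_const.indicator hA
  have haddm : Measurable fun p : E × E => ind (p.1 + p.2) := hindm.comp measurable_add
  have h0 : ((volume.withDensity f).prod ν) ((fun p : E × E => p.1 + p.2) ⁻¹' A)
      = ∫⁻ p : E × E, ind (p.1 + p.2) ∂((volume.withDensity f).prod ν) := by
    rw [← lintegral_indicator_one (measurable_add hA)]
    exact lintegral_congr fun p => by
      by_cases hp : p.1 + p.2 ∈ A <;>
        simp [ind, Set.indicator_apply, Set.mem_preimage, hp]
  rw [h0, lintegral_prod _ haddm.aemeasurable,
    lintegral_withDensity_eq_lintegral_mul _ hf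
      (Measurable.lintegral_prod_right (f := fun x z => ind (x + z)) haddm)]
  simp only [Pi.mul_apply]
  calc ∫⁻ x, f x * ∫⁻ z, ind (x + z) ∂ν
      = ∫⁻ x, (∫⁻ z, f x * ind (x + z) ∂ν) := by
        refine lintegral_congr fun x => ?_
        exact (lintegral_const_mul (f x) (by fun_prop)).symm
    _ = ∫⁻ z, (∫⁻ x, f x * ind (x + z)) ∂ν :=
        lintegral_lintegral_swap (f := fun x z => f x * ind (x + z))
          ((hf.comp measurable_fst).mul haddm).aemeasurable
    _ = ∫⁻ z, (∫⁻ w, f (w - z) * ind w) ∂ν := by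
        refine lintegral_congr fun z => ?_
        have := lintegral_sub_right_eq_self (μ := (volume : Measure E))
          (fun w => f (w - z) * ind w) (-z)
        simp only [sub_neg_eq_add, add_sub_cancel_right] at this
        exact this
    _ = ∫⁻ w, (∫⁻ z, f (w - z) * ind w ∂ν) :=
        lintegral_lintegral_swap (μ := ν) (ν := (volume : Measure E))
          (f := fun z w => f (w - z) * ind w)
          ((hf.comp (measurable_snd.sub measurable_fst)).mul
            (hindm.comp measurable_snd)).aemeasurable
    _ = ∫⁻ w, A.indicator (fun w => ∫⁻ z, f (w - z) ∂ν) w := by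
        refine lintegral_congr fun w => ?_
        rw [lintegral_mul_const _ (by fun_prop : Measurable fun z => f (w - z))]
        by_cases hw : w ∈ A <;> simp [ind, Set.indicator, hw]
lemma key_bound (μX μY μZ : Measure E)
    [IsProbabilityMeasure μX] [IsProbabilityMeasure μY] [IsProbabilityMeasure μZ]
    (f g k s u r : E → ℝ≥0∞)
    (hf : Measurable f) (hg : Measurable g) (hk : Measurable k)
    (hs : Measurable s) (hu : Measurable u) (hr : Measurable r)
    (hμX : μX = volume.withDensity f) (hμY : μY = volume.withDensity g)
    (hμZ : μZ = volume.withDensity k)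
    (S1 : ∀ᵐ w ∂(volume : Measure E), (∫⁻ x, f x * u (w - x)) = r w)
    (S2 : ∀ᵐ w ∂(volume : Measure E), (∫⁻ y, g y * s (w - y)) = r w)
    (hrint : ∫⁻ w, r w ∂(volume : Measure E) = 1) :
    ∫⁻ p : E × E × E,
        (s (p.1 + p.2.2) * u (p.2.1 + p.2.2)) / (r (p.1 + p.2.1 + p.2.2) * k p.2.2)
      ∂(μX.prod (μY.prod μZ)) ≤ 1 := by
  set F : E × E × E → ℝ≥0∞ := fun p =>
    (s (p.1 + p.2.2) * u (p.2.1 + p.2.2)) / (r (p.1 + p.2.1 + p.2.2) * k p.2.2) with hF_def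
  have hF : Measurable F := by
    apply Measurable.div <;> fun_prop
  have step1 : ∫⁻ p : E × E × E, F p ∂(μX.prod (μY.prod μZ))
      = ∫⁻ x, f x * ∫⁻ y, g y * ∫⁻ z, k z * F (x, y, z) := by
    rw [lintegral_prod _ hF.aemeasurable, hμX,
      lintegral_withDensity_eq_lintegral_mul _ hf
        (Measurable.lintegral_prod_right (f := fun x q => F (x, q)) hF)]
    refine lintegral_congr fun x => ?_
    simp only [Pi.mul_apply]
    congr 1
    rw [lintegral_prod _ (by fun_prop : Measurable fun q : E × E => F (x, q)).aemeasurable,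
      hμY, lintegral_withDensity_eq_lintegral_mul _ hg
        (Measurable.lintegral_prod_right (f := fun y z => F (x, y, z)) (by fun_prop))]
    refine lintegral_congr fun y => ?_
    simp only [Pi.mul_apply]
    congr 1
    rw [hμZ, lintegral_withDensity_eq_lintegral_mul _ hk (by fun_prop)]
    rfl
  have step2 : (∫⁻ x, f x * ∫⁻ y, g y * ∫⁻ z, k z * F (x, y, z))
      ≤ ∫⁻ x, f x * ∫⁻ y, g y * ∫⁻ z, (s (x+z) * u (y+z)) / r (x+y+z) :=
    lintegral_mono fun x => mul_le_mul_right
      (lintegral_mono fun y => mul_le_mul_right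
        (lintegral_mono fun z =>
          ennreal_cancel (s (x+z) * u (y+z)) (r (x+y+z)) (k z)) _) _
  have hsub : ∀ x y : E, (∫⁻ z, (s (x+z) * u (y+z)) / r (x+y+z))
      = ∫⁻ w, (s (w-y) * u (w-x)) * (r w)⁻¹ := by
    intro x y
    rw [← lintegral_add_right_eq_self (fun w => (s (w-y) * u (w-x)) * (r w)⁻¹) (x+y)]
    refine lintegral_congr fun z => ?_
    rw [show z + (x+y) - y = x + z by abel, show z + (x+y) - x = y + z by abel,
      show z + (x+y) = x + y + z by abel, div_eq_mul_inv]
  have hinnery : Measurable fun p : E × E => ∫⁻ y, g y * ((s (p.2 - y) * u (p.2 - p.1)) * (r p.2)⁻¹) :=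
    Measurable.lintegral_prod_right
      (f := fun (p : E × E) y => g y * ((s (p.2 - y) * u (p.2 - p.1)) * (r p.2)⁻¹))
      (by fun_prop)
  have step4 : (∫⁻ x, f x * ∫⁻ y, g y * ∫⁻ w, (s (w-y) * u (w-x)) * (r w)⁻¹)
      = ∫⁻ w, ∫⁻ x, f x * ∫⁻ y, g y * ((s (w-y) * u (w-x)) * (r w)⁻¹) := by
    calc (∫⁻ x, f x * ∫⁻ y, g y * ∫⁻ w, (s (w-y) * u (w-x)) * (r w)⁻¹)
        = ∫⁻ x, f x * ∫⁻ w, (∫⁻ y, g y * ((s (w-y) * u (w-x)) * (r w)⁻¹)) := by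
          refine lintegral_congr fun x => ?_
          congr 1
          calc (∫⁻ y, g y * ∫⁻ w, (s (w-y) * u (w-x)) * (r w)⁻¹)
              = ∫⁻ y, ∫⁻ w, g y * ((s (w-y) * u (w-x)) * (r w)⁻¹) :=
                lintegral_congr fun y => (lintegral_const_mul _ (by fun_prop)).symm
            _ = ∫⁻ w, ∫⁻ y, g y * ((s (w-y) * u (w-x)) * (r w)⁻¹) :=
                lintegral_lintegral_swap
                  (f := fun y w => g y * ((s (w-y) * u (w-x)) * (r w)⁻¹))
                  (by fun_prop)
      _ = ∫⁻ x, ∫⁻ w, f x * ∫⁻ y, g y * ((s (w-y) * u (w-x)) * (r w)⁻¹) := by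
          refine lintegral_congr fun x => ?_
          exact (lintegral_const_mul _ (Measurable.lintegral_prod_right
            (f := fun w y => g y * ((s (w-y) * u (w-x)) * (r w)⁻¹)) (by fun_prop))).symm
      _ = ∫⁻ w, ∫⁻ x, f x * ∫⁻ y, g y * ((s (w-y) * u (w-x)) * (r w)⁻¹) :=
          lintegral_lintegral_swap
            (f := fun x w => f x * ∫⁻ y, g y * ((s (w-y) * u (w-x)) * (r w)⁻¹))
            (((hf.comp measurable_fst).mul
              ((Measurable.lintegral_prod_right
                (f := fun (p : E × E) y => g y * ((s (p.2 - y) * u (p.2 - p.1)) * (r p.2)⁻¹))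
                (by fun_prop)).comp (measurable_fst.prodMk measurable_snd))).aemeasurable)
  have step5 : ∀ᵐ w ∂(volume : Measure E),
      (∫⁻ x, f x * ∫⁻ y, g y * ((s (w-y) * u (w-x)) * (r w)⁻¹)) ≤ r w := by
    filter_upwards [S1, S2] with w h1 h2
    have inner_y : ∀ x : E, (∫⁻ y, g y * ((s (w-y) * u (w-x)) * (r w)⁻¹))
        = r w * (u (w-x) * (r w)⁻¹) := by
      intro x
      calc (∫⁻ y, g y * ((s (w-y) * u (w-x)) * (r w)⁻¹))
          = ∫⁻ y, (g y * s (w-y)) * (u (w-x) * (r w)⁻¹) :=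
            lintegral_congr fun y => by ring
        _ = (∫⁻ y, g y * s (w-y)) * (u (w-x) * (r w)⁻¹) :=
            lintegral_mul_const _ (by fun_prop)
        _ = r w * (u (w-x) * (r w)⁻¹) := by rw [h2]
    calc (∫⁻ x, f x * ∫⁻ y, g y * ((s (w-y) * u (w-x)) * (r w)⁻¹))
        = ∫⁻ x, (f x * u (w-x)) * (r w * (r w)⁻¹) := by
          refine lintegral_congr fun x => ?_
          rw [inner_y x]; ring
      _ = (∫⁻ x, f x * u (w-x)) * (r w * (r w)⁻¹) :=
          lintegral_mul_const _ (by fun_prop)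
      _ = r w * (r w * (r w)⁻¹) := by rw [h1]
      _ ≤ r w * 1 := mul_le_mul_right (ENNReal.mul_inv_le_one _) _
      _ = r w := mul_one _
  calc ∫⁻ p : E × E × E, F p ∂(μX.prod (μY.prod μZ))
      = ∫⁻ x, f x * ∫⁻ y, g y * ∫⁻ z, k z * F (x, y, z) := step1
    _ ≤ ∫⁻ x, f x * ∫⁻ y, g y * ∫⁻ z, (s (x+z) * u (y+z)) / r (x+y+z) := step2
    _ = ∫⁻ x, f x * ∫⁻ y, g y * ∫⁻ w, (s (w-y) * u (w-x)) * (r w)⁻¹ := by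
        refine lintegral_congr fun x => ?_
        congr 1
        refine lintegral_congr fun y => ?_
        rw [hsub x y]
    _ = ∫⁻ w, ∫⁻ x, f x * ∫⁻ y, g y * ((s (w-y) * u (w-x)) * (r w)⁻¹) := step4
    _ ≤ ∫⁻ w, r w := lintegral_mono_ae step5
    _ = 1 := hrint
variable {Ω : Type} [MeasureSpace Ω] [IsProbabilityMeasure (ℙ : Measure Ω)]

lemma map_add_of_indepFun {A B : Ω → E} (hA : Measurable A) (hB : Measurable B)
    (h : IndepFun A B ℙ) :
    Measure.map (fun ω => A ω + B ω) ℙ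
      = Measure.map (fun p : E × E => p.1 + p.2)
          ((Measure.map A ℙ).prod (Measure.map B ℙ)) := by
  rw [← (ProbabilityTheory.indepFun_iff_map_prod_eq_prod_map_map
      hA.aemeasurable hB.aemeasurable).mp h,
    Measure.map_map measurable_add (hA.prodMk hB)]
  rfl

-- integrability of log-density along the random variable
lemma logpdf_integrable_iff {V : Ω → E} (hV : Measurable V)
    (hac : Measure.map V ℙ ≪ volume) :
    Integrable (fun ω =>
        Real.log (((Measure.map V ℙ).rnDeriv volume (V ω)).toReal)) ℙ
      ↔ Integrable (fun x =>
          (((Measure.map V ℙ).rnDeriv volume x).toReal)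
            * Real.log (((Measure.map V ℙ).rnDeriv volume x).toReal)) volume := by
  set ν := Measure.map V ℙ with hν
  have : IsProbabilityMeasure ν := Measure.isProbabilityMeasure_map hV.aemeasurable
  set v := ν.rnDeriv volume with hv
  have hvm : Measurable v := Measure.measurable_rnDeriv ν volume
  have hgm : Measurable fun x => Real.log ((v x).toReal) :=
    Real.measurable_log.comp hvm.ennreal_toReal
  rw [show (fun ω => Real.log ((v (V ω)).toReal))
      = (fun x => Real.log ((v x).toReal)) ∘ V from rfl,
    ← integrable_map_measure hgm.aestronglyMeasurable hV.aemeasurable, ← hν]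
  nth_rewrite 1 [← Measure.withDensity_rnDeriv_eq ν volume hac]
  rw [integrable_withDensity_iff hvm (Measure.rnDeriv_lt_top ν volume)]
  constructor <;> intro h <;> exact h.congr (by
    refine Filter.Eventually.of_forall fun x => ?_; ring)

lemma logpdf_integral {V : Ω → E} (hV : Measurable V)
    (hac : Measure.map V ℙ ≪ volume) :
    ∫ ω, Real.log (((Measure.map V ℙ).rnDeriv volume (V ω)).toReal) ∂ℙ
      = ∫ x, (((Measure.map V ℙ).rnDeriv volume x).toReal)
            * Real.log (((Measure.map V ℙ).rnDeriv volume x).toReal) ∂volume := by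
  set ν := Measure.map V ℙ with hν
  have : IsProbabilityMeasure ν := Measure.isProbabilityMeasure_map hV.aemeasurable
  set v := ν.rnDeriv volume with hv
  have hvm : Measurable v := Measure.measurable_rnDeriv ν volume
  have hgm : Measurable fun x => Real.log ((v x).toReal) :=
    Real.measurable_log.comp hvm.ennreal_toReal
  rw [← integral_map hV.aemeasurable hgm.aestronglyMeasurable, ← hν,
    ← MeasureTheory.integral_rnDeriv_smul hac]
  simp [smul_eq_mul]
  rfl

lemma pdf_pos_ae {V : Ω → E} (hV : Measurable V)
    (hac : Measure.map V ℙ ≪ volume) :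
    ∀ᵐ ω ∂ℙ, 0 < ((Measure.map V ℙ).rnDeriv volume (V ω))
      ∧ ((Measure.map V ℙ).rnDeriv volume (V ω)) < ⊤ := by
  set ν := Measure.map V ℙ with hν
  set v := ν.rnDeriv volume with hv
  have hvm : Measurable v := Measure.measurable_rnDeriv ν volume
  have h1 : ∀ᵐ x ∂ν, 0 < v x := Measure.rnDeriv_pos hac
  have h2 : ∀ᵐ x ∂ν, v x < ⊤ := hac.ae_le (Measure.rnDeriv_lt_top ν volume)
  have h3 : ∀ᵐ x ∂ν, 0 < v x ∧ v x < ⊤ := h1.and h2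
  rw [hν, ae_map_iff hV.aemeasurable] at h3
  · exact h3
  · exact hvm measurableSet_Ioo

end EntropySubmodAux

open ENNReal in
/-- Submodularity of entropy with respect to convolution: for independent
random vectors `X, Y, Z` in ℝⁿ with absolutely continuous distributions and
well-defined entropies, `h(X+Y+Z) + h(Z) ≤ h(X+Z) + h(Y+Z)`. -/
theorem entropy_submodularity
    {n : ℕ} (hn : 1 ≤ n)
    {Ω : Type} [MeasureSpace Ω] (hP : IsProbabilityMeasure (ℙ : Measure Ω))
    (X Y Z : Ω → EuclideanSpace ℝ (Fin n))
    (hX : Measurable X) (hY : Measurable Y) (hZ : Measurable Z)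
    (hIndep : iIndepFun (m := fun _ : Fin 3 =>
        (inferInstance : MeasurableSpace (EuclideanSpace ℝ (Fin n))))
      ![X, Y, Z] (ℙ : Measure Ω))
    (hXac : Measure.map X (ℙ : Measure Ω) ≪ volume)
    (hYac : Measure.map Y (ℙ : Measure Ω) ≪ volume)
    (hZac : Measure.map Z (ℙ : Measure Ω) ≪ volume)
    (hXYZ : Integrable
      (entIntegrand (Measure.map (fun ω => X ω + Y ω + Z ω) (ℙ : Measure Ω))) volume)
    (hZe : Integrable (entIntegrand (Measure.map Z (ℙ : Measure Ω))) volume)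
    (hXZ : Integrable
      (entIntegrand (Measure.map (fun ω => X ω + Z ω) (ℙ : Measure Ω))) volume)
    (hYZ : Integrable
      (entIntegrand (Measure.map (fun ω => Y ω + Z ω) (ℙ : Measure Ω))) volume) :
    dEnt (Measure.map (fun ω => X ω + Y ω + Z ω) (ℙ : Measure Ω))
      + dEnt (Measure.map Z (ℙ : Measure Ω))
    ≤ dEnt (Measure.map (fun ω => X ω + Z ω) (ℙ : Measure Ω))
      + dEnt (Measure.map (fun ω => Y ω + Z ω) (ℙ : Measure Ω)) := by

  classical
  -- probability measure instances
  haveI : IsProbabilityMeasure (Measure.map X ℙ) := Measure.isProbabilityMeasure_map hX.aemeasurable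
  haveI : IsProbabilityMeasure (Measure.map Y ℙ) := Measure.isProbabilityMeasure_map hY.aemeasurable
  haveI : IsProbabilityMeasure (Measure.map Z ℙ) := Measure.isProbabilityMeasure_map hZ.aemeasurable
  haveI : IsProbabilityMeasure (Measure.map (fun ω => X ω + Z ω) ℙ) :=
    Measure.isProbabilityMeasure_map (hX.add hZ).aemeasurable
  haveI : IsProbabilityMeasure (Measure.map (fun ω => Y ω + Z ω) ℙ) :=
    Measure.isProbabilityMeasure_map (hY.add hZ).aemeasurable
  haveI : IsProbabilityMeasure (Measure.map (fun ω => X ω + Y ω + Z ω) ℙ) :=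
    Measure.isProbabilityMeasure_map ((hX.add hY).add hZ).aemeasurable
  -- independence facts
  have hmeas3 : ∀ i, Measurable (![X, Y, Z] i) := by
    intro i; fin_cases i <;> assumption
  have iXZ : IndepFun X Z ℙ := by
    simpa using hIndep.indepFun (show (0 : Fin 3) ≠ 2 by decide)
  have iYZ : IndepFun Y Z ℙ := by
    simpa using hIndep.indepFun (show (1 : Fin 3) ≠ 2 by decide)
  have iX_YZ : IndepFun X (fun ω => Y ω + Z ω) ℙ := by
    have h := hIndep.indepFun_add_right hmeas3 0 1 2 (by decide) (by decide)
    exact h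
  have iY_XZ : IndepFun Y (fun ω => X ω + Z ω) ℙ := by
    have h := hIndep.indepFun_add_right hmeas3 1 0 2 (by decide) (by decide)
    exact h
  have iX_pYZ : IndepFun X (fun ω => (Y ω, Z ω)) ℙ := by
    have h := hIndep.indepFun_prodMk hmeas3 1 2 0 (by decide) (by decide)
    simpa using h.symm
  -- abstract densities for X and Y
  obtain ⟨f, hfm, hfX⟩ : ∃ f : (EuclideanSpace ℝ (Fin n)) → ℝ≥0∞, Measurable f ∧
      Measure.map X ℙ = volume.withDensity f :=
    ⟨(Measure.map X ℙ).rnDeriv volume, Measure.measurable_rnDeriv _ _,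
      (Measure.withDensity_rnDeriv_eq _ _ hXac).symm⟩
  obtain ⟨g, hgm, hgY⟩ : ∃ g : (EuclideanSpace ℝ (Fin n)) → ℝ≥0∞, Measurable g ∧
      Measure.map Y ℙ = volume.withDensity g :=
    ⟨(Measure.map Y ℙ).rnDeriv volume, Measure.measurable_rnDeriv _ _,
      (Measure.withDensity_rnDeriv_eq _ _ hYac).symm⟩
  -- concrete densities
  set k : (EuclideanSpace ℝ (Fin n)) → ℝ≥0∞ := (Measure.map Z ℙ).rnDeriv volume with hk_def
  set s : (EuclideanSpace ℝ (Fin n)) → ℝ≥0∞ := (Measure.map (fun ω => X ω + Z ω) ℙ).rnDeriv volume with hs_def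
  set u : (EuclideanSpace ℝ (Fin n)) → ℝ≥0∞ := (Measure.map (fun ω => Y ω + Z ω) ℙ).rnDeriv volume with hu_def
  set r : (EuclideanSpace ℝ (Fin n)) → ℝ≥0∞ := (Measure.map (fun ω => X ω + Y ω + Z ω) ℙ).rnDeriv volume with hr_def
  have hkm : Measurable k := Measure.measurable_rnDeriv _ _
  have hsm : Measurable s := Measure.measurable_rnDeriv _ _
  have hum : Measurable u := Measure.measurable_rnDeriv _ _
  have hrm : Measurable r := Measure.measurable_rnDeriv _ _
  have hkZ : Measure.map Z ℙ = volume.withDensity k :=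
    (Measure.withDensity_rnDeriv_eq _ _ hZac).symm
  -- convolution representations
  have hXZ_eq : Measure.map (fun ω => X ω + Z ω) ℙ
      = volume.withDensity (fun w => ∫⁻ z, f (w - z) ∂(Measure.map Z ℙ)) := by
    rw [EntropySubmodAux.map_add_of_indepFun hX hZ iXZ, hfX]
    exact EntropySubmodAux.conv_withDensity f hfm _
  have hXZac' : Measure.map (fun ω => X ω + Z ω) ℙ ≪ volume := by
    rw [hXZ_eq]; exact withDensity_absolutelyContinuous _ _
  have hYZ_eq : Measure.map (fun ω => Y ω + Z ω) ℙ
      = volume.withDensity (fun w => ∫⁻ z, g (w - z) ∂(Measure.map Z ℙ)) := by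
    rw [EntropySubmodAux.map_add_of_indepFun hY hZ iYZ, hgY]
    exact EntropySubmodAux.conv_withDensity g hgm _
  have hYZac' : Measure.map (fun ω => Y ω + Z ω) ℙ ≪ volume := by
    rw [hYZ_eq]; exact withDensity_absolutelyContinuous _ _
  have hWfun1 : (fun ω => X ω + Y ω + Z ω) = (fun ω => X ω + (Y ω + Z ω)) := by
    funext ω; abel
  have hWfun2 : (fun ω => X ω + Y ω + Z ω) = (fun ω => Y ω + (X ω + Z ω)) := by
    funext ω; abel
  have hW_eq1 : Measure.map (fun ω => X ω + Y ω + Z ω) ℙ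
      = volume.withDensity
          (fun w => ∫⁻ z, f (w - z) ∂(Measure.map (fun ω => Y ω + Z ω) ℙ)) := by
    rw [hWfun1, EntropySubmodAux.map_add_of_indepFun (B := fun ω => Y ω + Z ω) hX (hY.add hZ) iX_YZ, hfX]
    exact EntropySubmodAux.conv_withDensity f hfm _
  have hW_eq2 : Measure.map (fun ω => X ω + Y ω + Z ω) ℙ
      = volume.withDensity
          (fun w => ∫⁻ z, g (w - z) ∂(Measure.map (fun ω => X ω + Z ω) ℙ)) := by
    rw [hWfun2, EntropySubmodAux.map_add_of_indepFun (B := fun ω => X ω + Z ω) hY (hX.add hZ) iY_XZ, hgY]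
    exact EntropySubmodAux.conv_withDensity g hgm _
  have hWac : Measure.map (fun ω => X ω + Y ω + Z ω) ℙ ≪ volume := by
    rw [hW_eq1]; exact withDensity_absolutelyContinuous _ _
  -- the two a.e. convolution identities
  have S1 : ∀ᵐ w ∂(volume : Measure (EuclideanSpace ℝ (Fin n))), (∫⁻ x, f x * u (w - x)) = r w := by
    have hdm : Measurable fun w =>
        ∫⁻ z, f (w - z) ∂(Measure.map (fun ω => Y ω + Z ω) ℙ) :=
      Measurable.lintegral_prod_right (f := fun w z => f (w - z)) (by fun_prop)
    have h1 := Measure.rnDeriv_withDensity (volume : Measure (EuclideanSpace ℝ (Fin n))) hdm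
    rw [← hW_eq1] at h1
    have h2 : ∀ w : (EuclideanSpace ℝ (Fin n)), (∫⁻ z, f (w - z) ∂(Measure.map (fun ω => Y ω + Z ω) ℙ))
        = ∫⁻ x, f x * u (w - x) := by
      intro w
      rw [← Measure.withDensity_rnDeriv_eq _ _ hYZac',
        lintegral_withDensity_eq_lintegral_mul _ hum (by fun_prop)]
      simp only [Pi.mul_apply]
      calc ∫⁻ z, u z * f (w - z)
          = ∫⁻ x, u (w - x) * f (w - (w - x)) :=
            (EntropySubmodAux.lintegral_sub_left' (fun z => u z * f (w - z)) (by fun_prop) w).symm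
        _ = ∫⁻ x, f x * u (w - x) :=
            lintegral_congr fun x => by rw [_root_.sub_sub_cancel, mul_comm]
    filter_upwards [h1] with w hw
    rw [← h2 w, hr_def]
    exact hw.symm
  have S2 : ∀ᵐ w ∂(volume : Measure (EuclideanSpace ℝ (Fin n))), (∫⁻ y, g y * s (w - y)) = r w := by
    have hdm : Measurable fun w =>
        ∫⁻ z, g (w - z) ∂(Measure.map (fun ω => X ω + Z ω) ℙ) :=
      Measurable.lintegral_prod_right (f := fun w z => g (w - z)) (by fun_prop)
    have h1 := Measure.rnDeriv_withDensity (volume : Measure (EuclideanSpace ℝ (Fin n))) hdm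
    rw [← hW_eq2] at h1
    have h2 : ∀ w : (EuclideanSpace ℝ (Fin n)), (∫⁻ z, g (w - z) ∂(Measure.map (fun ω => X ω + Z ω) ℙ))
        = ∫⁻ y, g y * s (w - y) := by
      intro w
      rw [← Measure.withDensity_rnDeriv_eq _ _ hXZac',
        lintegral_withDensity_eq_lintegral_mul _ hsm (by fun_prop)]
      simp only [Pi.mul_apply]
      calc ∫⁻ z, s z * g (w - z)
          = ∫⁻ y, s (w - y) * g (w - (w - y)) :=
            (EntropySubmodAux.lintegral_sub_left' (fun z => s z * g (w - z)) (by fun_prop) w).symm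
        _ = ∫⁻ y, g y * s (w - y) :=
            lintegral_congr fun y => by rw [_root_.sub_sub_cancel, mul_comm]
    filter_upwards [h1] with w hw
    rw [← h2 w, hr_def]
    exact hw.symm
  have hrint : ∫⁻ w, r w ∂(volume : Measure (EuclideanSpace ℝ (Fin n))) = 1 := by
    rw [hr_def, Measure.lintegral_rnDeriv hWac]
    exact measure_univ
  -- joint law
  have hjoint : Measure.map (fun ω => (X ω, (Y ω, Z ω))) ℙ
      = (Measure.map X ℙ).prod ((Measure.map Y ℙ).prod (Measure.map Z ℙ)) := by
    rw [(ProbabilityTheory.indepFun_iff_map_prod_eq_prod_map_map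
        hX.aemeasurable (hY.prodMk hZ).aemeasurable).mp iX_pYZ,
      (ProbabilityTheory.indepFun_iff_map_prod_eq_prod_map_map
        hY.aemeasurable hZ.aemeasurable).mp iYZ]
  -- the key lintegral bound
  have hFm : Measurable (fun p : (EuclideanSpace ℝ (Fin n)) × (EuclideanSpace ℝ (Fin n)) × (EuclideanSpace ℝ (Fin n)) =>
      (s (p.1 + p.2.2) * u (p.2.1 + p.2.2)) / (r (p.1 + p.2.1 + p.2.2) * k p.2.2)) := by
    apply Measurable.div <;> fun_prop
  have hT' : ∫⁻ ω, (s (X ω + Z ω) * u (Y ω + Z ω))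
      / (r (X ω + Y ω + Z ω) * k (Z ω)) ∂ℙ ≤ 1 := by
    calc ∫⁻ ω, (s (X ω + Z ω) * u (Y ω + Z ω))
          / (r (X ω + Y ω + Z ω) * k (Z ω)) ∂ℙ
        = ∫⁻ p : (EuclideanSpace ℝ (Fin n)) × (EuclideanSpace ℝ (Fin n)) × (EuclideanSpace ℝ (Fin n)),
            (s (p.1 + p.2.2) * u (p.2.1 + p.2.2))
              / (r (p.1 + p.2.1 + p.2.2) * k p.2.2)
            ∂(Measure.map (fun ω => (X ω, (Y ω, Z ω))) ℙ) :=
          (lintegral_map hFm (hX.prodMk (hY.prodMk hZ))).symm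
      _ = ∫⁻ p : (EuclideanSpace ℝ (Fin n)) × (EuclideanSpace ℝ (Fin n)) × (EuclideanSpace ℝ (Fin n)),
            (s (p.1 + p.2.2) * u (p.2.1 + p.2.2))
              / (r (p.1 + p.2.1 + p.2.2) * k p.2.2)
            ∂((Measure.map X ℙ).prod ((Measure.map Y ℙ).prod (Measure.map Z ℙ))) := by
          rw [hjoint]
      _ ≤ 1 := EntropySubmodAux.key_bound _ _ _ f g k s u r hfm hgm hkm hsm hum hrm hfX hgY hkZ S1 S2 hrint
  -- log-density integrability and integral identities
  have hLs_int : Integrable (fun ω => Real.log ((s (X ω + Z ω)).toReal)) ℙ :=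
    (EntropySubmodAux.logpdf_integrable_iff (hX.add hZ) hXZac').mpr hXZ
  have hLu_int : Integrable (fun ω => Real.log ((u (Y ω + Z ω)).toReal)) ℙ :=
    (EntropySubmodAux.logpdf_integrable_iff (hY.add hZ) hYZac').mpr hYZ
  have hLr_int : Integrable (fun ω => Real.log ((r (X ω + Y ω + Z ω)).toReal)) ℙ :=
    (EntropySubmodAux.logpdf_integrable_iff ((hX.add hY).add hZ) hWac).mpr hXYZ
  have hLk_int : Integrable (fun ω => Real.log ((k (Z ω)).toReal)) ℙ :=
    (EntropySubmodAux.logpdf_integrable_iff hZ hZac).mpr hZe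
  have hEs : ∫ ω, Real.log ((s (X ω + Z ω)).toReal) ∂ℙ
      = - dEnt (Measure.map (fun ω => X ω + Z ω) ℙ) := by
    have h := EntropySubmodAux.logpdf_integral (hX.add hZ) hXZac'
    calc ∫ ω, Real.log ((s (X ω + Z ω)).toReal) ∂ℙ
        = ∫ x, (((Measure.map (fun ω => X ω + Z ω) ℙ).rnDeriv volume x).toReal)
            * Real.log (((Measure.map (fun ω => X ω + Z ω) ℙ).rnDeriv volume x).toReal)
            ∂volume := h
      _ = - dEnt (Measure.map (fun ω => X ω + Z ω) ℙ) := by simp [dEnt]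
  have hEu : ∫ ω, Real.log ((u (Y ω + Z ω)).toReal) ∂ℙ
      = - dEnt (Measure.map (fun ω => Y ω + Z ω) ℙ) := by
    have h := EntropySubmodAux.logpdf_integral (hY.add hZ) hYZac'
    calc ∫ ω, Real.log ((u (Y ω + Z ω)).toReal) ∂ℙ
        = ∫ x, (((Measure.map (fun ω => Y ω + Z ω) ℙ).rnDeriv volume x).toReal)
            * Real.log (((Measure.map (fun ω => Y ω + Z ω) ℙ).rnDeriv volume x).toReal)
            ∂volume := h
      _ = - dEnt (Measure.map (fun ω => Y ω + Z ω) ℙ) := by simp [dEnt]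
  have hEr : ∫ ω, Real.log ((r (X ω + Y ω + Z ω)).toReal) ∂ℙ
      = - dEnt (Measure.map (fun ω => X ω + Y ω + Z ω) ℙ) := by
    have h := EntropySubmodAux.logpdf_integral ((hX.add hY).add hZ) hWac
    calc ∫ ω, Real.log ((r (X ω + Y ω + Z ω)).toReal) ∂ℙ
        = ∫ x, (((Measure.map (fun ω => X ω + Y ω + Z ω) ℙ).rnDeriv volume x).toReal)
            * Real.log (((Measure.map (fun ω => X ω + Y ω + Z ω) ℙ).rnDeriv volume x).toReal)
            ∂volume := h
      _ = - dEnt (Measure.map (fun ω => X ω + Y ω + Z ω) ℙ) := by simp [dEnt]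
  have hEk : ∫ ω, Real.log ((k (Z ω)).toReal) ∂ℙ
      = - dEnt (Measure.map Z ℙ) := by
    have h := EntropySubmodAux.logpdf_integral hZ hZac
    calc ∫ ω, Real.log ((k (Z ω)).toReal) ∂ℙ
        = ∫ x, (((Measure.map Z ℙ).rnDeriv volume x).toReal)
            * Real.log (((Measure.map Z ℙ).rnDeriv volume x).toReal)
            ∂volume := h
      _ = - dEnt (Measure.map Z ℙ) := by simp [dEnt]
  -- positivity of densities along the random variables
  have pos_s := EntropySubmodAux.pdf_pos_ae (hX.add hZ) hXZac'
  have pos_u := EntropySubmodAux.pdf_pos_ae (hY.add hZ) hYZac'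
  have pos_r := EntropySubmodAux.pdf_pos_ae ((hX.add hY).add hZ) hWac
  have pos_k := EntropySubmodAux.pdf_pos_ae hZ hZac
  -- the ratio random variable
  set T' : Ω → ℝ≥0∞ := fun ω =>
    (s (X ω + Z ω) * u (Y ω + Z ω)) / (r (X ω + Y ω + Z ω) * k (Z ω)) with hT'_def
  have hT'm : Measurable T' := by
    apply Measurable.div <;> fun_prop
  have hT'ne : ∫⁻ ω, T' ω ∂ℙ ≠ ⊤ := by
    refine ne_top_of_le_ne_top ENNReal.one_ne_top ?_
    exact hT'
  have hTint : Integrable (fun ω => (T' ω).toReal) ℙ :=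
    integrable_toReal_of_lintegral_ne_top hT'm.aemeasurable hT'ne
  have hTlt : ∀ᵐ ω ∂ℙ, T' ω < ⊤ := ae_lt_top hT'm hT'ne
  have hTle : ∫ ω, (T' ω).toReal ∂ℙ ≤ 1 := by
    rw [integral_toReal hT'm.aemeasurable hTlt]
    calc (∫⁻ ω, T' ω ∂ℙ).toReal ≤ (1 : ℝ≥0∞).toReal :=
      ENNReal.toReal_mono ENNReal.one_ne_top hT'
    _ = 1 := by simp
  -- pointwise comparison
  have hpt : ∀ᵐ ω ∂ℙ,
      Real.log ((s (X ω + Z ω)).toReal) + Real.log ((u (Y ω + Z ω)).toReal)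
        - (Real.log ((r (X ω + Y ω + Z ω)).toReal) + Real.log ((k (Z ω)).toReal))
      ≤ (T' ω).toReal - 1 := by
    filter_upwards [pos_s, pos_u, pos_r, pos_k] with ω h1 h2 h3 h4
    have ha : 0 < (s (X ω + Z ω)).toReal := ENNReal.toReal_pos h1.1.ne' h1.2.ne
    have hb : 0 < (u (Y ω + Z ω)).toReal := ENNReal.toReal_pos h2.1.ne' h2.2.ne
    have hc : 0 < (r (X ω + Y ω + Z ω)).toReal := ENNReal.toReal_pos h3.1.ne' h3.2.ne
    have hd : 0 < (k (Z ω)).toReal := ENNReal.toReal_pos h4.1.ne' h4.2.ne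
    have hTω : (T' ω).toReal
        = ((s (X ω + Z ω)).toReal * (u (Y ω + Z ω)).toReal)
          / ((r (X ω + Y ω + Z ω)).toReal * (k (Z ω)).toReal) := by
      rw [hT'_def]
      simp [ENNReal.toReal_div, ENNReal.toReal_mul]
    have hlog := Real.log_le_sub_one_of_pos
      (div_pos (mul_pos ha hb) (mul_pos hc hd))
    rw [Real.log_div (mul_pos ha hb).ne' (mul_pos hc hd).ne',
      Real.log_mul ha.ne' hb.ne', Real.log_mul hc.ne' hd.ne'] at hlog
    rw [hTω]
    linarith
  -- put it all together
  have hint1 : Integrable (fun ω =>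
      Real.log ((s (X ω + Z ω)).toReal) + Real.log ((u (Y ω + Z ω)).toReal)
        - (Real.log ((r (X ω + Y ω + Z ω)).toReal) + Real.log ((k (Z ω)).toReal))) ℙ :=
    (hLs_int.add hLu_int).sub (hLr_int.add hLk_int)
  have hint2 : Integrable (fun ω => (T' ω).toReal - 1) ℙ :=
    hTint.sub (integrable_const 1)
  have hadd1 : Integrable (fun ω =>
      Real.log ((s (X ω + Z ω)).toReal) + Real.log ((u (Y ω + Z ω)).toReal)) ℙ :=
    hLs_int.add hLu_int
  have hadd2 : Integrable (fun ω =>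
      Real.log ((r (X ω + Y ω + Z ω)).toReal) + Real.log ((k (Z ω)).toReal)) ℙ :=
    hLr_int.add hLk_int
  have hfinal := integral_mono_ae hint1 hint2 hpt
  rw [integral_sub hadd1 hadd2,
    integral_add hLs_int hLu_int, integral_add hLr_int hLk_int,
    integral_sub hTint (integrable_const 1), integral_const] at hfinal
  simp only [measure_univ, probReal_univ, ENNReal.toReal_one, smul_eq_mul, mul_one, one_smul] at hfinal
  rw [hEs, hEu, hEr, hEk] at hfinal
  linarith [hTle]
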